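/- Let $S(x,y)$ be a real-analytic function near the origin in $\mathbb{R}^2$ with $S(0) = 0$, Newton polygon $N(S)$ and Newton distance $d$. If $F$ is a compact 1-dimensional edge of $N(S)$ lying entirely on or below the diagonal line $y = x$ (i.e., not intersecting the diagonal in its interior), then the polynomial $S_F(x,y) = \sum_{\alpha \in F} s_\alpha x^{\alpha_1} y^{\alpha_2}$ has no zero in $(\mathbb{R}\setminus\{0\})^2$ of order greater than $d$. -/

import Mathlib

open Set

private lemma segBound {p q x : ℝ × ℝ} (hx : x ∈ segment ℝ p q) :
    x.1 ≤ max p.1 q.1 ∧ x.2 ≤ max p.2 q.2 := by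
  obtain ⟨u, v, hu, hv, huv, hx⟩ := hx
  have h1 : x.1 = u * p.1 + v * q.1 := by rw [← hx]; rfl
  have h2 : x.2 = u * p.2 + v * q.2 := by rw [← hx]; rfl
  constructor
  · rw [h1]
    calc u * p.1 + v * q.1 ≤ u * max p.1 q.1 + v * max p.1 q.1 := by
          gcongr <;> simp [le_max_left, le_max_right]
      _ = max p.1 q.1 := by rw [← add_mul, huv, one_mul]
  · rw [h2]
    calc u * p.2 + v * q.2 ≤ u * max p.2 q.2 + v * max p.2 q.2 := by
          gcongr <;> simp [le_max_left, le_max_right]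
      _ = max p.2 q.2 := by rw [← add_mul, huv, one_mul]

private lemma iterDerivPoly (t : Finset (ℕ × ℕ)) (c : ℕ × ℕ → ℝ) :
    ∀ b : ℕ, iteratedDeriv b (fun y : ℝ => ∑ α ∈ t, c α * y ^ α.2)
      = fun y => ∑ α ∈ t, c α * (α.2.descFactorial b : ℝ) * y ^ (α.2 - b) := by
  intro b
  induction b with
  | zero => simp
  | succ n ih =>
    rw [iteratedDeriv_succ, ih]
    funext y
    rw [deriv_fun_sum (fun i _ => by
      exact DifferentiableAt.const_mul (differentiableAt_pow (𝕜 := ℝ) _) _)]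
    refine Finset.sum_congr rfl fun α _ => ?_
    rw [deriv_const_mul _ (differentiableAt_pow (𝕜 := ℝ) _), deriv_pow_field]
    have he : α.2 - (n + 1) = (α.2 - n) - 1 := by omega
    rw [he, Nat.descFactorial_succ]
    push_cast
    ring

/-- Lemma 5.1: if `F` is a compact 1-dimensional edge of the Newton polygon of a
real-analytic `S(x,y)` with `S(0)=0` lying entirely on or below the diagonal `y = x`,
then `S_F` has no zero on `(ℝ∖{0})²` of order greater than the Newton distance `d`:
at every such point some partial derivative of order at most `d` is nonzero. -/
theorem stmt11 (s : ℕ × ℕ → ℝ) (hs0 : s (0, 0) = 0)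
    (hanalytic : ∃ C R : ℝ, 0 < C ∧ 0 < R ∧ ∀ α : ℕ × ℕ, |s α| ≤ C * R ^ (α.1 + α.2))
    (hsupp : ∃ α, s α ≠ 0)
    (N : Set (ℝ × ℝ))
    (hN : N = convexHull ℝ
      {x : ℝ × ℝ | ∃ α : ℕ × ℕ, s α ≠ 0 ∧ (α.1 : ℝ) ≤ x.1 ∧ (α.2 : ℝ) ≤ x.2})
    (d : ℝ) (hd : d = sInf {t : ℝ | (t, t) ∈ N})
    (F : Set (ℝ × ℝ)) (p q : ℝ × ℝ) (hpq : p ≠ q) (hF : F = segment ℝ p q)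
    (hFN : F ⊆ N)
    (hface : ∃ (a : ℝ × ℝ) (c : ℝ), a ≠ 0 ∧ (∀ x ∈ N, c ≤ a.1 * x.1 + a.2 * x.2) ∧
      F = {x ∈ N | a.1 * x.1 + a.2 * x.2 = c})
    (hbelow : ∀ x ∈ F, x.2 ≤ x.1) :
    ∀ z : ℝ × ℝ, z.1 ≠ 0 → z.2 ≠ 0 →
      ∃ a b : ℕ, (a + b : ℝ) ≤ d ∧
        iteratedDeriv a (fun x : ℝ =>
          iteratedDeriv b (fun y : ℝ =>
            ∑ᶠ α ∈ {α : ℕ × ℕ | s α ≠ 0 ∧ ((α.1 : ℝ), (α.2 : ℝ)) ∈ F},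
              s α * x ^ α.1 * y ^ α.2) z.2) z.1 ≠ 0 := by
  intro z hz1 hz2
  obtain ⟨a, c, ha0, hineq, hFeq⟩ := hface
  set G : Set (ℝ × ℝ) :=
    {x : ℝ × ℝ | ∃ α : ℕ × ℕ, s α ≠ 0 ∧ (α.1 : ℝ) ≤ x.1 ∧ (α.2 : ℝ) ≤ x.2} with hG
  have hGN : G ⊆ N := hN ▸ subset_convexHull ℝ G
  obtain ⟨α₀, hα₀⟩ := hsupp
  -- upward closure of N
  have hup : ∀ x ∈ N, ∀ u v : ℝ, 0 ≤ u → 0 ≤ v → (x.1 + u, x.2 + v) ∈ N := by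
    intro x hx u v hu hv
    rw [hN] at hx ⊢
    have hsub : convexHull ℝ G ⊆ (fun w : ℝ × ℝ => w + (u, v)) ⁻¹' convexHull ℝ G := by
      apply convexHull_min
      · intro w ⟨β, hβ, h1, h2⟩
        exact subset_convexHull ℝ G ⟨β, hβ, by simp; constructor <;> [linarith; linarith]⟩
      · exact (convex_convexHull ℝ G).translate_preimage_left _
    exact hsub hx
  -- a.1 ≥ 0 and a.2 ≥ 0
  have ha2 : 0 ≤ a.2 := by
    by_contra h
    push_neg at h
    set M : ℝ := max (α₀.2 : ℝ) ((c - a.1 * α₀.1 - 1) / a.2) with hM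
    have hmem : ((α₀.1 : ℝ), M) ∈ N := hGN ⟨α₀, hα₀, le_refl _, le_max_left _ _⟩
    have h1 := hineq _ hmem
    have hle : (c - a.1 * α₀.1 - 1) / a.2 ≤ M := le_max_right _ _
    have h2 := mul_le_mul_of_nonpos_left hle h.le
    rw [mul_div_cancel₀ _ h.ne] at h2
    simp only at h1
    linarith
  have ha1 : 0 ≤ a.1 := by
    by_contra h
    push_neg at h
    set M : ℝ := max (α₀.1 : ℝ) ((c - a.2 * α₀.2 - 1) / a.1) with hM
    have hmem : (M, (α₀.2 : ℝ)) ∈ N := hGN ⟨α₀, hα₀, le_max_left _ _, le_refl _⟩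
    have h1 := hineq _ hmem
    have hle : (c - a.2 * α₀.2 - 1) / a.1 ≤ M := le_max_right _ _
    have h2 := mul_le_mul_of_nonpos_left hle h.le
    rw [mul_div_cancel₀ _ h.ne] at h2
    simp only at h1
    linarith
  have hpF : p ∈ F := hF ▸ left_mem_segment ℝ p q
  have hqF : q ∈ F := hF ▸ right_mem_segment ℝ p q
  have hpN := hFeq ▸ hpF
  have hqN := hFeq ▸ hqF
  -- strict positivity of a.1
  have ha1' : 0 < a.1 := by
    rcases lt_or_eq_of_le ha1 with hlt | heq
    · exact hlt
    exfalso
    have ha2' : a.2 ≠ 0 := fun h2 => ha0 (Prod.ext heq.symm h2)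
    have hp2 : a.2 * p.2 = c := by
      have := hpN.2; (try simp only at this); rw [← heq, zero_mul, zero_add] at this; exact this
    have hq2 : a.2 * q.2 = c := by
      have := hqN.2; (try simp only at this); rw [← heq, zero_mul, zero_add] at this; exact this
    have hpq2 : p.2 = q.2 := mul_left_cancel₀ ha2' (hp2.trans hq2.symm)
    set r : ℝ × ℝ := (p.1 + (max p.1 q.1 + 1 - p.1), p.2 + 0) with hr
    have hrN : r ∈ N := hup p hpN.1 _ _ (by simp [le_max_left]; linarith [le_max_left p.1 q.1]) le_rfl
    have hrF : r ∈ F := by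
      rw [hFeq]
      refine ⟨hrN, ?_⟩
      simp only [hr, ← heq, add_zero]
      linarith
    have := (segBound (hF ▸ hrF)).1
    simp only [hr] at this
    linarith
  have ha2' : 0 < a.2 := by
    rcases lt_or_eq_of_le ha2 with hlt | heq
    · exact hlt
    exfalso
    have ha1'' : a.1 ≠ 0 := ne_of_gt ha1'
    have hp1 : a.1 * p.1 = c := by
      have := hpN.2; (try simp only at this); rw [← heq, zero_mul, add_zero] at this; exact this
    have hq1 : a.1 * q.1 = c := by
      have := hqN.2; (try simp only at this); rw [← heq, zero_mul, add_zero] at this; exact this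
    have hpq1 : p.1 = q.1 := mul_left_cancel₀ ha1'' (hp1.trans hq1.symm)
    set r : ℝ × ℝ := (p.1 + 0, p.2 + (max p.2 q.2 + 1 - p.2)) with hr
    have hrN : r ∈ N := hup p hpN.1 _ _ le_rfl (by linarith [le_max_left p.2 q.2])
    have hrF : r ∈ F := by
      rw [hFeq]
      refine ⟨hrN, ?_⟩
      simp only [hr, ← heq, add_zero]
      linarith
    have := (segBound (hF ▸ hrF)).2
    simp only [hr] at this
    linarith
  -- the set of exponents on F
  set T : Set (ℕ × ℕ) := {α : ℕ × ℕ | s α ≠ 0 ∧ ((α.1 : ℝ), (α.2 : ℝ)) ∈ F} with hT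
  -- T is nonempty
  have hTne : T.Nonempty := by
    have hpc : p ∈ convexHull ℝ G := hN ▸ hpN.1
    rw [convexHull_eq] at hpc
    obtain ⟨ι, tt, w, zf, hw0, hw1, hzG, hcm⟩ := hpc
    rw [Finset.centerMass_eq_of_sum_1 _ _ hw1] at hcm
    have e1 : ∑ i ∈ tt, w i * (zf i).1 = p.1 := by
      rw [← hcm, Prod.fst_sum]; rfl
    have e2 : ∑ i ∈ tt, w i * (zf i).2 = p.2 := by
      rw [← hcm, Prod.snd_sum]; rfl
    have hsum0 : ∑ i ∈ tt, w i * (a.1 * (zf i).1 + a.2 * (zf i).2 - c) = 0 := by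
      have hexp : ∀ i, w i * (a.1 * (zf i).1 + a.2 * (zf i).2 - c)
          = a.1 * (w i * (zf i).1) + a.2 * (w i * (zf i).2) - c * w i := by
        intro i; ring
      simp only [hexp]
      rw [Finset.sum_sub_distrib, Finset.sum_add_distrib, ← Finset.mul_sum, ← Finset.mul_sum,
        ← Finset.mul_sum, e1, e2, hw1]
      have := hpN.2
      try simp only at this
      linarith
    have hterm : ∀ i ∈ tt, w i * (a.1 * (zf i).1 + a.2 * (zf i).2 - c) = 0 := by
      rw [← Finset.sum_eq_zero_iff_of_nonneg]
      · exact hsum0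
      · intro i hi
        have := hineq _ (hGN (hzG i hi))
        exact mul_nonneg (hw0 i hi) (by linarith)
    obtain ⟨i, hi, hwi⟩ : ∃ i ∈ tt, w i ≠ 0 :=
      Finset.exists_ne_zero_of_sum_ne_zero (hw1 ▸ one_ne_zero)
    have hLz : a.1 * (zf i).1 + a.2 * (zf i).2 = c := by
      have := hterm i hi
      rcases mul_eq_zero.1 this with h | h
      · exact absurd h hwi
      · linarith
    obtain ⟨β, hβ, hβ1, hβ2⟩ := hzG i hi
    refine ⟨β, hβ, ?_⟩
    have hβN : ((β.1 : ℝ), (β.2 : ℝ)) ∈ N := hGN ⟨β, hβ, le_refl _, le_refl _⟩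
    have hLβ : a.1 * β.1 + a.2 * β.2 = c := by
      have hle : a.1 * (β.1 : ℝ) + a.2 * β.2 ≤ c := by
        rw [← hLz]
        gcongr
      have hge := hineq _ hβN
      simp only at hge
      linarith
    rw [hFeq]
    exact ⟨hβN, hLβ⟩
  -- T is finite
  have hTfin : T.Finite := by
    set n : ℕ := max (⌈max p.1 q.1⌉₊) (⌈max p.2 q.2⌉₊) + 1 with hn
    apply Set.Finite.subset (Finset.range n ×ˢ Finset.range n).finite_toSet
    intro α hα
    obtain ⟨-, hαF⟩ := hα
    obtain ⟨h1, h2⟩ := segBound (hF ▸ hαF)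
    have k1 : α.1 ≤ ⌈max p.1 q.1⌉₊ := Nat.cast_le.1 (h1.trans (Nat.le_ceil _))
    have k2 : α.2 ≤ ⌈max p.2 q.2⌉₊ := Nat.cast_le.1 (h2.trans (Nat.le_ceil _))
    simp only [Finset.coe_product, Set.mem_prod, Finset.mem_coe, Finset.mem_range]
    omega
  -- pick the element with maximal second coordinate
  obtain ⟨αm, hαmT, hαmax⟩ : ∃ αm ∈ hTfin.toFinset, ∀ α ∈ hTfin.toFinset, α.2 ≤ αm.2 :=
    hTfin.toFinset.exists_max_image Prod.snd (by rwa [Set.Finite.toFinset_nonempty])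
  rw [Set.Finite.mem_toFinset] at hαmT
  obtain ⟨hsαm, hαmF⟩ := hαmT
  have hαmN := hFeq ▸ hαmF
  have hαmc : a.1 * (αm.1 : ℝ) + a.2 * αm.2 = c := by
    have := hαmN.2; simpa using this
  have hbelowm : (αm.2 : ℝ) ≤ (αm.1 : ℝ) := hbelow _ hαmF
  -- b ≤ d
  have hbd : (αm.2 : ℝ) ≤ d := by
    rw [hd]
    apply le_csInf
    · refine ⟨max (α₀.1 : ℕ) α₀.2, ?_⟩
      exact hGN ⟨α₀, hα₀, by exact_mod_cast Nat.cast_le.2 (le_max_left _ _),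
        by exact_mod_cast Nat.cast_le.2 (le_max_right _ _)⟩
    · intro t ht
      have h1 := hineq _ ht
      simp only at h1
      nlinarith
  -- uniqueness of the maximal exponent
  have huniq : ∀ α ∈ hTfin.toFinset, α ≠ αm → α.2 < αm.2 := by
    intro α hα hne
    rw [Set.Finite.mem_toFinset] at hα
    rcases lt_or_eq_of_le (hαmax α (by rwa [Set.Finite.mem_toFinset])) with h | h
    · exact h
    exfalso
    obtain ⟨hsα, hαF⟩ := hα
    have hαN := hFeq ▸ hαF
    have hαc : a.1 * (α.1 : ℝ) + a.2 * α.2 = c := by have := hαN.2; simpa using this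
    have : (α.1 : ℝ) = αm.1 := by
      have h2 : (α.2 : ℝ) = αm.2 := by exact_mod_cast h
      rw [h2] at hαc
      have := mul_left_cancel₀ (ne_of_gt ha1') (by linarith : a.1 * (α.1:ℝ) = a.1 * αm.1)
      exact this
    exact hne (Prod.ext (Nat.cast_injective this) h)
  -- now compute the derivative
  refine ⟨0, αm.2, by simpa using hbd, ?_⟩
  rw [iteratedDeriv_zero]
  have hTc : T = ↑hTfin.toFinset := (Set.Finite.coe_toFinset _).symm
  rw [hTc]
  simp only [finsum_mem_coe_finset]
  rw [iterDerivPoly hTfin.toFinset (fun α => s α * z.1 ^ α.1) αm.2]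
  beta_reduce
  have hval : ∑ α ∈ hTfin.toFinset, s α * z.1 ^ α.1 * (α.2.descFactorial αm.2 : ℝ)
      * z.2 ^ (α.2 - αm.2) = s αm * z.1 ^ αm.1 * (Nat.factorial αm.2) := by
    rw [Finset.sum_eq_single αm]
    · rw [Nat.descFactorial_self, Nat.sub_self, pow_zero, mul_one]
    · intro α hα hne
      rw [Nat.descFactorial_eq_zero_iff_lt.2 (huniq α hα hne)]
      simp
    · intro h
      exact absurd (hTfin.mem_toFinset.2 (by exact ⟨hsαm, hαmF⟩)) h
  rw [hval]
  exact mul_ne_zero (mul_ne_zero hsαm (pow_ne_zero _ hz1))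
    (Nat.cast_ne_zero.2 (Nat.factorial_ne_zero _))
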